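/- The set N_∞ of irrational numbers β ∈ (0, 1) such that q_{j+1}(β) ≥ exp(j·q_j(β)) for infinitely many indices j — where q_j(β) denotes the denominator of the j-th convergent of the continued fraction expansion of β — is a dense G_δ subset of the interval (0, 1). -/

import Mathlib

/-- The Gauss-map orbit of `β`: `cfX β 0 = β` and `cfX β (n+1) = frac (1 / cfX β n)`. -/
noncomputable def cfX (β : ℝ) : ℕ → ℝ
  | 0 => β
  | n + 1 => Int.fract (cfX β n)⁻¹

/-- `cfA β n` is the `(n+1)`-st partial quotient `a_{n+1}` of the continued fraction
expansion `β = [0; a₁, a₂, …]` of `β ∈ (0, 1)`. -/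
noncomputable def cfA (β : ℝ) (n : ℕ) : ℤ := ⌊(cfX β n)⁻¹⌋

/-- `cfQ β j` is the denominator `q_j` of the `j`-th convergent of the continued
fraction expansion of `β`, given by `q₀ = 1`, `q₁ = a₁`,
`q_{j+1} = a_{j+1}·q_j + q_{j−1}`. -/
noncomputable def cfQ (β : ℝ) : ℕ → ℤ
  | 0 => 1
  | 1 => cfA β 0
  | n + 2 => cfA β (n + 1) * cfQ β (n + 1) + cfQ β n

open Filter Topology

lemma cfX_zero (β : ℝ) : cfX β 0 = β := rfl

lemma cfA_def (β : ℝ) (n : ℕ) : cfA β n = ⌊(cfX β n)⁻¹⌋ := rfl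

lemma cfQ_zero (β : ℝ) : cfQ β 0 = 1 := rfl

lemma cfQ_one (β : ℝ) : cfQ β 1 = cfA β 0 := rfl

lemma cfQ_two (β : ℝ) (n : ℕ) :
    cfQ β (n + 2) = cfA β (n + 1) * cfQ β (n + 1) + cfQ β n := rfl

lemma cfX_succ (β : ℝ) (n : ℕ) : cfX β (n + 1) = Int.fract (cfX β n)⁻¹ := rfl

lemma cfX_irrational {x : ℝ} (hx : Irrational x) : ∀ n, Irrational (cfX x n)
  | 0 => hx
  | n + 1 => by
    have h := (cfX_irrational hx n).inv
    rw [cfX_succ, Int.fract]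
    exact h.sub_intCast _

lemma cfX_mem_Ioo {x : ℝ} (hx : Irrational x) (h : x ∈ Set.Ioo (0:ℝ) 1) :
    ∀ n, cfX x n ∈ Set.Ioo (0:ℝ) 1
  | 0 => h
  | n + 1 => by
    have hirr := cfX_irrational hx (n + 1)
    have h1 : Int.fract (cfX x n)⁻¹ < 1 := Int.fract_lt_one _
    have h0 : 0 ≤ Int.fract (cfX x n)⁻¹ := Int.fract_nonneg _
    refine ⟨lt_of_le_of_ne h0 ?_, h1⟩
    intro hc
    exact hirr ⟨0, by rw [← hc]; simp [cfX_succ]⟩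

lemma one_lt_cfX_inv {x : ℝ} (hx : Irrational x) (h : x ∈ Set.Ioo (0:ℝ) 1) (n : ℕ) :
    1 < (cfX x n)⁻¹ := by
  have h2 := cfX_mem_Ioo hx h n
  exact (one_lt_inv₀ h2.1).mpr h2.2

lemma cfA_pos {x : ℝ} (hx : Irrational x) (h : x ∈ Set.Ioo (0:ℝ) 1) (n : ℕ) :
    1 ≤ cfA x n := by
  have := one_lt_cfX_inv hx h n
  exact Int.le_floor.mpr (by push_cast; linarith)

lemma cfQ_pos {x : ℝ} (hx : Irrational x) (h : x ∈ Set.Ioo (0:ℝ) 1) :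
    ∀ n, 1 ≤ cfQ x n ∧ 1 ≤ cfQ x (n + 1)
  | 0 => ⟨le_refl 1, cfA_pos hx h 0⟩
  | n + 1 => by
    obtain ⟨h1, h2⟩ := cfQ_pos hx h n
    refine ⟨h2, ?_⟩
    have h3 := cfA_pos hx h (n + 1)
    show 1 ≤ cfA x (n + 1) * cfQ x (n + 1) + cfQ x n
    nlinarith

lemma cfX_shift (x : ℝ) : ∀ n, cfX x (n + 1) = cfX (Int.fract x⁻¹) n
  | 0 => rfl
  | n + 1 => by rw [cfX_succ, cfX_shift x n, ← cfX_succ]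

lemma cfA_shift (x : ℝ) (n : ℕ) : cfA x (n + 1) = cfA (Int.fract x⁻¹) n := by
  rw [cfA, cfX_shift, cfA]

lemma eventually_floor_eq {f : ℝ → ℝ} {x : ℝ} (hf : ContinuousAt f x)
    (h : Irrational (f x)) : ∀ᶠ y in 𝓝 x, ⌊f y⌋ = ⌊f x⌋ := by
  have hlt : (⌊f x⌋ : ℝ) < f x :=
    (Int.floor_le _).lt_of_ne (fun hc => h ⟨⌊f x⌋, hc⟩)
  have hmem : f x ∈ Set.Ioo ((⌊f x⌋ : ℝ)) (⌊f x⌋ + 1) := ⟨hlt, Int.lt_floor_add_one _⟩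
  filter_upwards [hf.eventually_mem (isOpen_Ioo.mem_nhds hmem)] with y hy
  exact Int.floor_eq_iff.mpr ⟨hy.1.le, hy.2⟩

lemma continuousAt_cfX {x : ℝ} (hx : Irrational x) : ∀ n, ContinuousAt (cfX · n) x
  | 0 => by
    have : (cfX · 0) = fun y : ℝ => y := funext fun y => cfX_zero y
    rw [this]; exact continuousAt_id
  | n + 1 => by
    have ih := continuousAt_cfX hx n
    have hne : cfX x n ≠ 0 := (cfX_irrational hx n).ne_zero
    have hinv : ContinuousAt (fun y => (cfX y n)⁻¹) x := ih.inv₀ hne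
    have hirr : Irrational (cfX x n)⁻¹ := (cfX_irrational hx n).inv
    have hfr : ContinuousAt Int.fract ((cfX x n)⁻¹) :=
      continuousAt_fract (fun hc => hirr ⟨_, hc.symm⟩)
    have h2 : ContinuousAt (fun y => Int.fract (cfX y n)⁻¹) x := ContinuousAt.comp (f := fun y => (cfX y n)⁻¹) hfr hinv
    have : (cfX · (n+1)) = fun y => Int.fract (cfX y n)⁻¹ := funext fun y => cfX_succ y n
    rw [this]; exact h2

lemma eventually_cfA {x : ℝ} (hx : Irrational x) (n : ℕ) :
    ∀ᶠ y in 𝓝 x, cfA y n = cfA x n := by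
  have hc : ContinuousAt (fun y => (cfX y n)⁻¹) x :=
    (continuousAt_cfX hx n).inv₀ (cfX_irrational hx n).ne_zero
  filter_upwards [eventually_floor_eq hc (cfX_irrational hx n).inv] with y hy
  rw [cfA_def, cfA_def]; exact hy

lemma eventually_cfQ {x : ℝ} (hx : Irrational x) :
    ∀ n, ∀ᶠ y in 𝓝 x, cfQ y n = cfQ x n ∧ cfQ y (n+1) = cfQ x (n+1)
  | 0 => by
    filter_upwards [eventually_cfA hx 0] with y hy
    exact ⟨by rw [cfQ_zero, cfQ_zero], by rw [cfQ_one, cfQ_one, hy]⟩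
  | n + 1 => by
    filter_upwards [eventually_cfQ hx n, eventually_cfA hx (n+1)] with y hy ha
    exact ⟨hy.2, by rw [cfQ_two, cfQ_two, hy.1, hy.2, ha]⟩

lemma mem_interior_C {x : ℝ} (hx : Irrational x) (j : ℕ)
    (h : Real.exp ((j : ℝ) * (cfQ x j : ℝ)) ≤ (cfQ x (j + 1) : ℝ)) :
    x ∈ interior {β : ℝ | Real.exp ((j : ℝ) * (cfQ β j : ℝ)) ≤ (cfQ β (j + 1) : ℝ)} := by
  rw [mem_interior_iff_mem_nhds]
  filter_upwards [eventually_cfQ hx j] with y hy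
  simp only [Set.mem_setOf_eq, hy.1, hy.2]
  exact h


/-- Build a real from `m` partial quotients `a 0, …, a (m-1)` and a tail `t`. -/
noncomputable def cfF : (ℕ → ℤ) → ℕ → ℝ → ℝ
  | _, 0, t => t
  | a, m + 1, t => ((a 0 : ℝ) + cfF (fun i => a (i + 1)) m t)⁻¹

lemma cfF_mem_Ioo : ∀ (m : ℕ) (a : ℕ → ℤ) (t : ℝ), (∀ i < m, 1 ≤ a i) →
    t ∈ Set.Ioo (0:ℝ) 1 → cfF a m t ∈ Set.Ioo (0:ℝ) 1
  | 0, a, t, _, ht => ht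
  | m + 1, a, t, ha, ht => by
    have h := cfF_mem_Ioo m (fun i => a (i + 1)) t (fun i hi => ha (i+1) (by omega)) ht
    have h1 : (1 : ℝ) ≤ (a 0 : ℝ) := by exact_mod_cast ha 0 (by omega)
    have h2 : 1 < (a 0 : ℝ) + cfF (fun i => a (i + 1)) m t := by linarith [h.1]
    show ((a 0 : ℝ) + cfF (fun i => a (i + 1)) m t)⁻¹ ∈ Set.Ioo (0:ℝ) 1
    constructor
    · positivity
    · rw [inv_lt_one_iff₀]; right; exact h2

/-- The constructed number has the prescribed quotients and tail. -/
lemma cfF_spec : ∀ (m : ℕ) (a : ℕ → ℤ) (t : ℝ), (∀ i < m, 1 ≤ a i) →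
    t ∈ Set.Ioo (0:ℝ) 1 →
    (∀ i < m, cfA (cfF a m t) i = a i) ∧ cfX (cfF a m t) m = t
  | 0, a, t, _, ht => ⟨fun i hi => absurd hi (by omega), cfX_zero t⟩
  | m + 1, a, t, ha, ht => by
    set a' : ℕ → ℤ := fun i => a (i + 1) with ha'
    have ha'pos : ∀ i < m, 1 ≤ a' i := fun i hi => ha (i+1) (by omega)
    obtain ⟨ih1, ih2⟩ := cfF_spec m a' t ha'pos ht
    set β' := cfF a' m t with hβ'
    have hβ'mem : β' ∈ Set.Ioo (0:ℝ) 1 := cfF_mem_Ioo m a' t ha'pos ht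
    have h1 : (1 : ℝ) ≤ (a 0 : ℝ) := by exact_mod_cast ha 0 (by omega)
    have hsum : (0:ℝ) < (a 0 : ℝ) + β' := by linarith [hβ'mem.1]
    have hβdef : cfF a (m+1) t = ((a 0 : ℝ) + β')⁻¹ := rfl
    set β := cfF a (m+1) t with hβ
    have hβinv : β⁻¹ = (a 0 : ℝ) + β' := by rw [hβdef, inv_inv]
    have hfr : Int.fract β⁻¹ = β' := by
      rw [hβinv, Int.fract_intCast_add, Int.fract_eq_self.mpr ⟨hβ'mem.1.le, hβ'mem.2⟩]
    have hshift : ∀ k, cfX β (k + 1) = cfX β' k := by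
      intro k; rw [cfX_shift, hfr]
    have hA0 : cfA β 0 = a 0 := by
      rw [cfA_def, cfX_zero, hβinv, Int.floor_intCast_add,
        Int.floor_eq_zero_iff.mpr ⟨hβ'mem.1.le, hβ'mem.2⟩, add_zero]
    refine ⟨fun i hi => ?_, by rw [hshift m, ih2]⟩
    cases i with
    | zero => exact hA0
    | succ k =>
      rw [cfA_def, hshift k, ← cfA_def]
      exact ih1 k (by omega)

lemma pair_contract {A B u u' : ℝ} (hA : 1 ≤ A) (hB : 1 ≤ B)
    (hu : u ∈ Set.Ioo (0:ℝ) 1) (hu' : u' ∈ Set.Ioo (0:ℝ) 1) :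
    |(A + (B + u)⁻¹)⁻¹ - (A + (B + u')⁻¹)⁻¹| ≤ |u - u'| / 4 := by
  have hD : 0 < B + u := by linarith [hu.1]
  have hD' : 0 < B + u' := by linarith [hu'.1]
  have hP : 2 ≤ A * (B + u) + 1 := by nlinarith [hu.1]
  have hP' : 2 ≤ A * (B + u') + 1 := by nlinarith [hu'.1]
  have hE : 0 < A + (B + u)⁻¹ := by positivity
  have hE' : 0 < A + (B + u')⁻¹ := by positivity
  have heq : (A + (B + u)⁻¹)⁻¹ - (A + (B + u')⁻¹)⁻¹ =
      (u - u') / ((A * (B + u) + 1) * (A * (B + u') + 1)) := by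
    field_simp
    ring
  rw [heq, abs_div, abs_of_pos (by nlinarith : (0:ℝ) < (A * (B + u) + 1) * (A * (B + u') + 1))]
  exact div_le_div_of_nonneg_left (abs_nonneg _) (by norm_num) (by nlinarith)

lemma cfF_dist : ∀ (m : ℕ) (a : ℕ → ℤ) (t t' : ℝ), (∀ i < m, 1 ≤ a i) →
    t ∈ Set.Ioo (0:ℝ) 1 → t' ∈ Set.Ioo (0:ℝ) 1 →
    |cfF a m t - cfF a m t'| ≤ (1/4 : ℝ) ^ (m / 2) * |t - t'|
  | 0, a, t, t', _, _, _ => by simp [cfF]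
  | 1, a, t, t', ha, ht, ht' => by
    have h1 : (1:ℝ) ≤ (a 0 : ℝ) := by exact_mod_cast ha 0 (by omega)
    have hD : 0 < (a 0 : ℝ) + t := by linarith [ht.1]
    have hD' : 0 < (a 0 : ℝ) + t' := by linarith [ht'.1]
    show |((a 0 : ℝ) + cfF _ 0 t)⁻¹ - ((a 0 : ℝ) + cfF _ 0 t')⁻¹| ≤ _
    have heq : ((a 0 : ℝ) + t)⁻¹ - ((a 0 : ℝ) + t')⁻¹ =
        (t' - t) / (((a 0 : ℝ) + t) * ((a 0 : ℝ) + t')) := by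
      field_simp
      ring
    show |((a 0 : ℝ) + t)⁻¹ - ((a 0 : ℝ) + t')⁻¹| ≤ _
    rw [heq, abs_div, abs_of_pos (by nlinarith : (0:ℝ) < ((a 0 : ℝ) + t) * ((a 0 : ℝ) + t'))]
    have h2 : |t' - t| = |t - t'| := abs_sub_comm _ _
    rw [h2]
    have : (1:ℝ) ≤ ((a 0 : ℝ) + t) * ((a 0 : ℝ) + t') := by nlinarith [ht.1, ht'.1]
    calc |t - t'| / (((a 0 : ℝ) + t) * ((a 0 : ℝ) + t')) ≤ |t - t'| / 1 :=
          div_le_div_of_nonneg_left (abs_nonneg _) (by norm_num) this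
      _ = (1/4 : ℝ) ^ (1 / 2 : ℕ) * |t - t'| := by norm_num
  | m + 2, a, t, t', ha, ht, ht' => by
    set a'' : ℕ → ℤ := fun i => a (i + 2) with ha''
    have ha''pos : ∀ i < m, 1 ≤ a'' i := fun i hi => ha (i + 2) (by omega)
    have ih := cfF_dist m a'' t t' ha''pos ht ht'
    have hu : cfF a'' m t ∈ Set.Ioo (0:ℝ) 1 := cfF_mem_Ioo m a'' t ha''pos ht
    have hu' : cfF a'' m t' ∈ Set.Ioo (0:ℝ) 1 := cfF_mem_Ioo m a'' t' ha''pos ht'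
    have h0 : (1:ℝ) ≤ (a 0 : ℝ) := by exact_mod_cast ha 0 (by omega)
    have h1 : (1:ℝ) ≤ (a 1 : ℝ) := by exact_mod_cast ha 1 (by omega)
    have hform : ∀ s : ℝ, cfF a (m + 2) s = ((a 0 : ℝ) + ((a 1 : ℝ) + cfF a'' m s)⁻¹)⁻¹ := by
      intro s; rfl
    rw [hform t, hform t']
    have := pair_contract h0 h1 hu hu'
    calc |((a 0:ℝ) + ((a 1:ℝ) + cfF a'' m t)⁻¹)⁻¹ - ((a 0:ℝ) + ((a 1:ℝ) + cfF a'' m t')⁻¹)⁻¹|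
        ≤ |cfF a'' m t - cfF a'' m t'| / 4 := this
      _ ≤ ((1/4 : ℝ) ^ (m / 2) * |t - t'|) / 4 := by
          apply div_le_div_of_nonneg_right ?_ (by norm_num)
          exact ih
      _ = (1/4 : ℝ) ^ ((m + 2) / 2) * |t - t'| := by
          rw [show (m + 2) / 2 = m / 2 + 1 by omega, pow_succ]; ring

lemma cfF_eq_self : ∀ (m : ℕ) (x : ℝ), Irrational x → x ∈ Set.Ioo (0:ℝ) 1 →
    cfF (cfA x) m (cfX x m) = x
  | 0, x, _, _ => cfX_zero x
  | m + 1, x, hx, hmem => by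
    set y := Int.fract x⁻¹ with hy
    have hy1 : cfX x 1 = y := by rw [cfX_succ, cfX_zero]
    have hyirr : Irrational y := by rw [← hy1]; exact cfX_irrational hx 1
    have hymem : y ∈ Set.Ioo (0:ℝ) 1 := by rw [← hy1]; exact cfX_mem_Ioo hx hmem 1
    have hAeq : (fun i => cfA x (i + 1)) = cfA y := funext fun i => cfA_shift x i
    have hXeq : cfX x (m + 1) = cfX y m := cfX_shift x m
    have hrec : cfF (cfA x) (m + 1) (cfX x (m + 1)) =
        ((cfA x 0 : ℝ) + cfF (fun i => cfA x (i + 1)) m (cfX x (m + 1)))⁻¹ := rfl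
    rw [hrec, hAeq, hXeq, cfF_eq_self m y hyirr hymem]
    have hA0 : (cfA x 0 : ℝ) = (⌊x⁻¹⌋ : ℝ) := by rw [cfA_def, cfX_zero]
    rw [hA0, hy]
    rw [Int.floor_add_fract]
    exact inv_inv x

lemma irrational_of_cfX {x : ℝ} : ∀ n, Irrational (cfX x n) → Irrational x
  | 0, h => by rwa [cfX_zero] at h
  | n + 1, h => by
    rw [cfX_succ, Int.fract] at h
    exact irrational_of_cfX n (h.of_sub_intCast _).of_inv

lemma cfQ_congr {x y : ℝ} : ∀ n, (∀ i < n, cfA y i = cfA x i) →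
    cfQ y n = cfQ x n
  | 0, _ => by rw [cfQ_zero, cfQ_zero]
  | 1, h => by rw [cfQ_one, cfQ_one, h 0 (by omega)]
  | n + 2, h => by
    rw [cfQ_two, cfQ_two, h (n+1) (by omega),
      cfQ_congr (n+1) (fun i hi => h i (by omega)),
      cfQ_congr n (fun i hi => h i (by omega))]

/-- The key construction for density. -/
lemma construction (N : ℕ) {x : ℝ} (hx : Irrational x) (hmem : x ∈ Set.Ioo (0:ℝ) 1)
    {ε : ℝ} (hε : 0 < ε) :
    ∃ β : ℝ, Irrational β ∧ β ∈ Set.Ioo (0:ℝ) 1 ∧ |β - x| < ε ∧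
      ∃ j, N ≤ j ∧ Real.exp ((j : ℝ) * (cfQ β j : ℝ)) ≤ (cfQ β (j + 1) : ℝ) := by
  obtain ⟨k, hk⟩ := exists_pow_lt_of_lt_one hε (by norm_num : (1/4 : ℝ) < 1)
  set K := max k (N + 1) with hK
  set m := 2 * K with hm
  have hm1 : 1 ≤ m := by omega
  have hmN : N ≤ m := by omega
  set a : ℕ → ℤ := cfA x with haa
  have ha : ∀ i < m, 1 ≤ a i := fun i _ => cfA_pos hx hmem i
  set Q : ℤ := cfQ x m with hQ
  have hQ1 : 1 ≤ Q := (cfQ_pos hx hmem m).1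
  set δ : ℝ := min (1/2) (Real.exp ((m : ℝ) * (Q : ℝ)) + 1)⁻¹ with hδ
  have hδpos : 0 < δ := lt_min (by norm_num) (by positivity)
  obtain ⟨t, htirr, htmem⟩ :=
    dense_irrational.exists_mem_open isOpen_Ioo (Set.nonempty_Ioo.mpr hδpos : (Set.Ioo (0:ℝ) δ).Nonempty)
  have ht01 : t ∈ Set.Ioo (0:ℝ) 1 :=
    ⟨htmem.1, lt_of_lt_of_le htmem.2 (le_trans (min_le_left _ _) (by norm_num))⟩
  set β := cfF a m t with hβ
  obtain ⟨hspec1, hspec2⟩ := cfF_spec m a t ha ht01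
  have hβmem : β ∈ Set.Ioo (0:ℝ) 1 := cfF_mem_Ioo m a t ha ht01
  have hβirr : Irrational β := irrational_of_cfX m (hspec2 ▸ htirr)
  have hs : cfX x m ∈ Set.Ioo (0:ℝ) 1 := cfX_mem_Ioo hx hmem m
  -- distance
  have hdist : |β - x| < ε := by
    have hx' : x = cfF a m (cfX x m) := (cfF_eq_self m x hx hmem).symm
    have h1 := cfF_dist m a t (cfX x m) ha ht01 hs
    have h2 : |t - cfX x m| ≤ 1 := by
      rw [abs_le]; constructor <;> [linarith [ht01.1, hs.2]; linarith [ht01.2, hs.1]]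
    have h3 : (1/4 : ℝ) ^ (m / 2) ≤ (1/4 : ℝ) ^ k := by
      apply pow_le_pow_of_le_one (by norm_num) (by norm_num)
      omega
    calc |β - x| = |cfF a m t - cfF a m (cfX x m)| := by rw [← hx']
      _ ≤ (1/4 : ℝ) ^ (m / 2) * |t - cfX x m| := h1
      _ ≤ (1/4 : ℝ) ^ (m / 2) * 1 := by
          apply mul_le_mul_of_nonneg_left h2 (by positivity)
      _ < ε := by rw [mul_one]; exact lt_of_le_of_lt h3 hk
  refine ⟨β, hβirr, hβmem, hdist, m, hmN, ?_⟩
  -- the condition at j = m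
  have hQβ : cfQ β m = Q := cfQ_congr m (fun i hi => hspec1 i hi)
  have hAm : Real.exp ((m : ℝ) * (Q : ℝ)) < (cfA β m : ℝ) := by
    have h1 : (cfA β m : ℝ) = (⌊t⁻¹⌋ : ℝ) := by rw [cfA_def, hspec2]
    have h2 : Real.exp ((m : ℝ) * (Q : ℝ)) + 1 < t⁻¹ := by
      have ht2 : t < (Real.exp ((m : ℝ) * (Q : ℝ)) + 1)⁻¹ :=
        lt_of_lt_of_le htmem.2 (min_le_right _ _)
      have := (inv_lt_inv₀ (by positivity) ht01.1).mpr ht2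
      rwa [inv_inv] at this
    have h3 : t⁻¹ - 1 < (⌊t⁻¹⌋ : ℝ) := Int.sub_one_lt_floor _
    rw [h1]; linarith
  have hQm1 : 1 ≤ cfQ β (m - 1) := (cfQ_pos hβirr hβmem (m - 1)).1
  obtain ⟨n, hn⟩ : ∃ n, m = n + 1 := ⟨m - 1, by omega⟩
  have hrec : cfQ β (m + 1) = cfA β m * cfQ β m + cfQ β n := by
    rw [hn]; exact cfQ_two β n
  have hQn : 1 ≤ cfQ β n := by
    have : n = m - 1 := by omega
    rw [this]; exact hQm1
  rw [hrec, hQβ]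
  push_cast
  have hAQ : (cfA β m : ℝ) * (Q : ℝ) ≥ (cfA β m : ℝ) := by
    have : (1:ℝ) ≤ (Q:ℝ) := by exact_mod_cast hQ1
    nlinarith [hAm, Real.exp_pos ((m : ℝ) * (Q : ℝ))]
  have : (1:ℝ) ≤ (cfQ β n : ℝ) := by exact_mod_cast hQn
  linarith

def cfC (j : ℕ) : Set ℝ :=
  {β : ℝ | Real.exp ((j : ℝ) * (cfQ β j : ℝ)) ≤ (cfQ β (j + 1) : ℝ)}

def cfD (N : ℕ) : Set ℝ := ⋃ j, ⋃ (_ : N ≤ j), interior (cfC j)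

lemma cfD_open (N : ℕ) : IsOpen (cfD N) :=
  isOpen_iUnion fun _ => isOpen_iUnion fun _ => isOpen_interior

set_option maxHeartbeats 1000000 in
lemma cfS_eq : {β : ℝ | β ∈ Set.Ioo (0 : ℝ) 1 ∧ Irrational β ∧
      {j : ℕ | Real.exp ((j : ℝ) * (cfQ β j : ℝ)) ≤ (cfQ β (j + 1) : ℝ)}.Infinite} =
    Set.Ioo (0:ℝ) 1 ∩ ({β : ℝ | Irrational β} ∩ ⋂ N, cfD N) := by
  ext β
  simp only [Set.mem_inter_iff, Set.mem_setOf_eq, Set.mem_iInter]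
  constructor
  · rintro ⟨h1, h2, h3⟩
    refine ⟨h1, h2, fun N => ?_⟩
    obtain ⟨j, hjmem, hjN⟩ := h3.exists_gt N
    simp only [cfD, Set.mem_iUnion]
    exact ⟨j, hjN.le, mem_interior_C h2 j hjmem⟩
  · rintro ⟨h1, h2, h3⟩
    refine ⟨h1, h2, ?_⟩
    rw [← Nat.frequently_atTop_iff_infinite, Filter.frequently_atTop]
    intro N
    have h4 := h3 N
    simp only [cfD, Set.mem_iUnion] at h4
    obtain ⟨j, hjN, hjmem⟩ := h4
    have h5 : β ∈ cfC j := interior_subset hjmem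
    rw [cfC, Set.mem_setOf_eq] at h5
    exact ⟨j, hjN, h5⟩

lemma cfD_dense (N : ℕ) : Set.Ioo (0:ℝ) 1 ⊆ closure (cfD N) := by
  intro x hx
  rw [mem_closure_iff]
  intro o ho hxo
  have ho' : IsOpen (o ∩ Set.Ioo (0:ℝ) 1) := ho.inter isOpen_Ioo
  obtain ⟨x', hx'irr, hx'mem⟩ := dense_irrational.exists_mem_open ho' ⟨x, hxo, hx⟩
  obtain ⟨ε, hεpos, hball⟩ := Metric.isOpen_iff.mp ho' x' hx'mem
  obtain ⟨β, hβirr, hβmem, hβdist, j, hjN, hjcond⟩ :=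
    construction N hx'irr hx'mem.2 hεpos
  have hβball : β ∈ o ∩ Set.Ioo (0:ℝ) 1 := hball (by
    rw [Metric.mem_ball, Real.dist_eq]; exact hβdist)
  refine ⟨β, hβball.1, ?_⟩
  simp only [cfD, Set.mem_iUnion]
  exact ⟨j, hjN, mem_interior_C hβirr j hjcond⟩

theorem Ninfty_dense_Gdelta :
    IsGδ {β : ℝ | β ∈ Set.Ioo (0 : ℝ) 1 ∧ Irrational β ∧
        {j : ℕ | Real.exp ((j : ℝ) * (cfQ β j : ℝ)) ≤ (cfQ β (j + 1) : ℝ)}.Infinite} ∧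
    Set.Ioo (0 : ℝ) 1 ⊆
      closure {β : ℝ | β ∈ Set.Ioo (0 : ℝ) 1 ∧ Irrational β ∧
        {j : ℕ | Real.exp ((j : ℝ) * (cfQ β j : ℝ)) ≤ (cfQ β (j + 1) : ℝ)}.Infinite} := by
  have hUopen : ∀ N : ℕ, IsOpen (cfD N ∪ (Set.Icc (0:ℝ) 1)ᶜ) := fun N =>
    (cfD_open N).union isClosed_Icc.isOpen_compl
  have hUdense : ∀ N : ℕ, Dense (cfD N ∪ (Set.Icc (0:ℝ) 1)ᶜ) := by
    intro N z
    by_cases hz : z ∈ Set.Icc (0:ℝ) 1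
    · have h1 : z ∈ closure (Set.Ioo (0:ℝ) 1) := by
        rw [closure_Ioo (by norm_num : (0:ℝ) ≠ 1)]; exact hz
      have h2 : closure (Set.Ioo (0:ℝ) 1) ⊆ closure (cfD N ∪ (Set.Icc (0:ℝ) 1)ᶜ) := by
        rw [← closure_closure (s := cfD N ∪ _)]
        apply closure_mono
        exact fun y hy => closure_mono Set.subset_union_left (cfD_dense N hy)
      exact h2 h1
    · exact subset_closure (Or.inr hz)
  have hgGδ : ∀ n : ℕ, IsGδ ({β : ℝ | Irrational β} ∩ (cfD n ∪ (Set.Icc (0:ℝ) 1)ᶜ)) :=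
    fun n => IsGδ.setOf_irrational.inter (hUopen n).isGδ
  have hgdense : ∀ n : ℕ, Dense ({β : ℝ | Irrational β} ∩ (cfD n ∪ (Set.Icc (0:ℝ) 1)ᶜ)) :=
    fun n => Dense.inter_of_Gδ IsGδ.setOf_irrational (hUopen n).isGδ
      dense_irrational (hUdense n)
  have hT : Dense (⋂ n, {β : ℝ | Irrational β} ∩ (cfD n ∪ (Set.Icc (0:ℝ) 1)ᶜ)) :=
    dense_iInter_of_Gδ hgGδ hgdense
  constructor
  · rw [cfS_eq]
    exact isOpen_Ioo.isGδ.inter (IsGδ.setOf_irrational.inter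
      (IsGδ.iInter fun N => (cfD_open N).isGδ))
  · intro x hx
    rw [mem_closure_iff]
    intro o ho hxo
    obtain ⟨y, hy1, hy2⟩ := hT.inter_open_nonempty (o ∩ Set.Ioo (0:ℝ) 1)
      (ho.inter isOpen_Ioo) ⟨x, hxo, hx⟩
    have hyIoo : y ∈ Set.Ioo (0:ℝ) 1 := hy1.2
    have hyIrr : Irrational y := (Set.mem_iInter.mp hy2 0).1
    have hyD : ∀ N, y ∈ cfD N := by
      intro N
      rcases (Set.mem_iInter.mp hy2 N).2 with h | h
      · exact h
      · exact absurd ⟨hyIoo.1.le, hyIoo.2.le⟩ h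
    refine ⟨y, hy1.1, ?_⟩
    rw [cfS_eq]
    exact ⟨hyIoo, hyIrr, Set.mem_iInter.mpr hyD⟩
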